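/- Let C = (C(k))_{k≥0} be a cosimplicial chain complex of real vector spaces, and suppose that for every k ≥ 0 the chain map C(k)_* → C(0)_* induced by the cosimplicial structure (the composite of codegeneracy maps corresponding to the unique morphism [k] → [0] in the simplex category) is a quasi-isomorphism. Then the projection pr₀ : C̃_* → C(0)_*, (x_k)_{k≥0} ↦ x₀, from the total complex is a quasi-isomorphism. -/

import Mathlib

/-- A cosimplicial chain complex of real vector spaces: chain complexes `C(k)` with
graded pieces `X k p`, cofaces `δ^i : C(k) → C(k+1)` (written `dl k i`, meaningful for
`0 ≤ i ≤ k+1` and recorded with flexible target degree, vanishing unless the degree is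
preserved) and codegeneracies `σ^i : C(k+1) → C(k)` (written `sg k i`, meaningful for
`0 ≤ i ≤ k`), all chain maps, satisfying the cosimplicial identities. -/
structure CosimplicialChainComplex : Type 1 where
  X : ℕ → ℤ → Type
  [instAddCommGroup : ∀ k p, AddCommGroup (X k p)]
  [instModule : ∀ k p, Module ℝ (X k p)]
  d : ∀ (k : ℕ) (p q : ℤ), X k p →ₗ[ℝ] X k q
  d_support : ∀ (k : ℕ) (p q : ℤ) (x : X k p), q ≠ p - 1 → d k p q x = 0
  d_sq : ∀ (k : ℕ) (p q r : ℤ) (x : X k p), d k q r (d k p q x) = 0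
  dl : ∀ (k i : ℕ) (p r : ℤ), X k p →ₗ[ℝ] X (k + 1) r
  dl_support : ∀ (k i : ℕ) (p r : ℤ) (x : X k p), r ≠ p → dl k i p r x = 0
  dl_chain : ∀ (k i : ℕ) (p q : ℤ) (x : X k p),
    dl k i q q (d k p q x) = d (k + 1) p q (dl k i p p x)
  sg : ∀ (k i : ℕ) (p : ℤ), X (k + 1) p →ₗ[ℝ] X k p
  sg_chain : ∀ (k i : ℕ) (p q : ℤ) (x : X (k + 1) p),
    sg k i q (d (k + 1) p q x) = d k p q (sg k i p x)
  dl_dl : ∀ (k i j : ℕ) (p : ℤ) (x : X k p), i < j → j ≤ k + 2 →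
    dl (k + 1) j p p (dl k i p p x) = dl (k + 1) i p p (dl k (j - 1) p p x)
  sg_sg : ∀ (k i j : ℕ) (p : ℤ) (x : X (k + 2) p), i ≤ j → j ≤ k →
    sg k j p (sg (k + 1) i p x) = sg k i p (sg (k + 1) (j + 1) p x)
  sg_dl_lt : ∀ (k i j : ℕ) (p : ℤ) (x : X (k + 1) p), i < j → j ≤ k + 1 →
    sg (k + 1) j p (dl (k + 1) i p p x) = dl k i p p (sg k (j - 1) p x)
  sg_dl_self : ∀ (k j : ℕ) (p : ℤ) (x : X k p), j ≤ k →
    sg k j p (dl k j p p x) = x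
  sg_dl_succ : ∀ (k j : ℕ) (p : ℤ) (x : X k p), j ≤ k →
    sg k j p (dl k (j + 1) p p x) = x
  sg_dl_gt : ∀ (k i j : ℕ) (p : ℤ) (x : X (k + 1) p), j + 1 < i → i ≤ k + 2 → j ≤ k →
    sg (k + 1) j p (dl (k + 1) i p p x) = dl k (i - 1) p p (sg k j p x)

attribute [instance] CosimplicialChainComplex.instAddCommGroup
  CosimplicialChainComplex.instModule

namespace CosimplicialChainComplex

def IsCycle (C : CosimplicialChainComplex) (k : ℕ) (q : ℤ) (x : C.X k q) : Prop :=
  C.d k q (q - 1) x = 0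

def IsBoundary (C : CosimplicialChainComplex) (k : ℕ) (q : ℤ) (x : C.X k q) : Prop :=
  ∃ y : C.X k (q + 1), C.d k (q + 1) q y = x

/-- The composite of codegeneracy maps `C(k) → C(0)` corresponding to the unique
morphism `[k] → [0]` of the simplex category. -/
def toZero (C : CosimplicialChainComplex) : ∀ (k : ℕ) (p : ℤ), C.X k p → C.X 0 p
  | 0, _ => fun x => x
  | (j + 1), p => fun x => C.toZero j p (C.sg j 0 p x)

/-- The total complex `C̃_n = ∏_{k ≥ 0} C(k)_{n+k}`. -/
def Tot (C : CosimplicialChainComplex) (n : ℤ) : Type := ∀ k : ℕ, C.X k (n + (k : ℤ))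

instance (C : CosimplicialChainComplex) (n : ℤ) : AddCommGroup (C.Tot n) :=
  inferInstanceAs (AddCommGroup (∀ k : ℕ, C.X k (n + (k : ℤ))))

instance (C : CosimplicialChainComplex) (n : ℤ) : Module ℝ (C.Tot n) :=
  inferInstanceAs (Module ℝ (∀ k : ℕ, C.X k (n + (k : ℤ))))

/-- The total differential `(∂̃ x)_k = ∂ x_k + δ_k (x_{k-1})`, where
`δ_k x := (−1)^{|x|+k−1} ∑_{i=0}^k (−1)^i δ_{k,i} x`. -/
noncomputable def totD (C : CosimplicialChainComplex) (n m : ℤ) (x : C.Tot n) :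
    C.Tot m := fun k =>
  C.d k (n + (k : ℤ)) (m + (k : ℤ)) (x k) +
    (match k with
      | 0 => 0
      | (j + 1) =>
          (-1 : ℝ) ^ ((n + (j : ℤ)) + ((j : ℤ) + 1) - 1) •
            ∑ i ∈ Finset.range (j + 2),
              (-1 : ℝ) ^ i • C.dl j i (n + (j : ℤ)) (m + ((j + 1 : ℕ) : ℤ)) (x j))

end CosimplicialChainComplex

namespace CosimplicialChainComplex

variable (C : CosimplicialChainComplex)

/-- degree-cast as a linear map -/
def cst {k : ℕ} {p q : ℤ} (h : p = q) : C.X k p →ₗ[ℝ] C.X k q :=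
  Eq.recOn (motive := fun r _ => C.X k p →ₗ[ℝ] C.X k r) h LinearMap.id

@[simp] lemma cst_refl {k : ℕ} {p : ℤ} (h : p = p) (v : C.X k p) : C.cst h v = v := rfl

lemma cst_cst {k : ℕ} {p q r : ℤ} (h1 : p = q) (h2 : q = r) (v : C.X k p) :
    C.cst h2 (C.cst h1 v) = C.cst (h1.trans h2) v := by subst h1; subst h2; rfl

lemma d_cst {k : ℕ} {p q r : ℤ} (h : p = q) (v : C.X k p) :
    C.d k q r (C.cst h v) = C.d k p r v := by subst h; rfl

lemma dl_cast (k i : ℕ) {p r : ℤ} (h : p = r) (v : C.X k p) :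
    C.dl k i p r v = C.cst h (C.dl k i p p v) := by subst h; rfl

lemma cst_isBoundary {C : CosimplicialChainComplex} {k : ℕ} {p q : ℤ} (h : p = q) {v : C.X k p}
    (hv : C.IsBoundary k p v) : C.IsBoundary k q (C.cst h v) := by subst h; exact hv

lemma isBoundary_zero (k : ℕ) (q : ℤ) : C.IsBoundary k q 0 := ⟨0, map_zero _⟩

lemma IsBoundary.smul' {C : CosimplicialChainComplex} {k : ℕ} {q : ℤ} {v : C.X k q} (c : ℝ)
    (hv : C.IsBoundary k q v) : C.IsBoundary k q (c • v) := by
  obtain ⟨y, hy⟩ := hv; exact ⟨c • y, by rw [map_smul, hy]⟩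

lemma IsBoundary.neg' {C : CosimplicialChainComplex} {k : ℕ} {q : ℤ} {v : C.X k q}
    (hv : C.IsBoundary k q v) : C.IsBoundary k q (-v) := by
  obtain ⟨y, hy⟩ := hv; exact ⟨-y, by rw [map_neg, hy]⟩

lemma isBoundary_elim {k : ℕ} {q p : ℤ} (h : p = q + 1) {v : C.X k q}
    (hb : C.IsBoundary k q v) : ∃ y : C.X k p, C.d k p q y = v := by subst h; exact hb

lemma isBoundary_of_d {k : ℕ} {p q : ℤ} (h : p = q + 1) (y : C.X k p) :
    C.IsBoundary k q (C.d k p q y) := by subst h; exact ⟨y, rfl⟩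

/-- the horizontal (cosimplicial) differential, without sign twist -/
noncomputable def delta (k : ℕ) (p : ℤ) : C.X k p →ₗ[ℝ] C.X (k + 1) p :=
  ∑ i ∈ Finset.range (k + 2), (-1 : ℝ) ^ i • C.dl k i p p

lemma delta_apply (k : ℕ) (p : ℤ) (x : C.X k p) :
    C.delta k p x = ∑ i ∈ Finset.range (k + 2), (-1 : ℝ) ^ i • C.dl k i p p x := by
  simp [delta]

lemma delta_d (k : ℕ) (p q : ℤ) (x : C.X k p) :
    C.delta k q (C.d k p q x) = C.d (k + 1) p q (C.delta k p x) := by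
  simp [delta_apply, map_sum, map_smul, C.dl_chain]

lemma delta_cst {k : ℕ} {p q : ℤ} (h : p = q) (v : C.X k p) :
    C.delta k q (C.cst h v) = C.cst h (C.delta k p v) := by subst h; rfl

lemma delta_delta (k : ℕ) (p : ℤ) (x : C.X k p) :
    C.delta (k + 1) p (C.delta k p x) = 0 := by
  have hrw : C.delta (k + 1) p (C.delta k p x)
      = ∑ ji ∈ Finset.range (k + 3) ×ˢ Finset.range (k + 2),
          (-1 : ℝ) ^ (ji.1 + ji.2) • C.dl (k + 1) ji.1 p p (C.dl k ji.2 p p x) := by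
    rw [Finset.sum_product]
    simp only [delta_apply, map_sum, map_smul, Finset.smul_sum, smul_smul, pow_add]
    rw [Finset.sum_comm]
    apply Finset.sum_congr rfl; intro j _
    apply Finset.sum_congr rfl; intro i _
    rw [mul_comm]
  rw [hrw]
  apply Finset.sum_involution
    (g := fun ji _ => if ji.1 ≤ ji.2 then (ji.2 + 1, ji.1) else (ji.2, ji.1 - 1))
  · intro a ha
    simp only [Finset.mem_product, Finset.mem_range] at ha
    by_cases hle : a.1 ≤ a.2
    · rw [if_pos hle]
      have hdd := C.dl_dl k a.1 (a.2 + 1) p x (by omega) (by omega)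
      simp only [Nat.add_sub_cancel] at hdd
      show (-1 : ℝ) ^ (a.1 + a.2) • C.dl (k + 1) a.1 p p (C.dl k a.2 p p x)
          + (-1 : ℝ) ^ (a.2 + 1 + a.1) • C.dl (k + 1) (a.2 + 1) p p (C.dl k a.1 p p x) = 0
      rw [hdd, ← add_smul,
        show a.2 + 1 + a.1 = (a.1 + a.2) + 1 by omega, pow_succ]
      ring_nf
      rw [zero_smul]
    · rw [if_neg hle]
      push_neg at hle
      have hdd := C.dl_dl k a.2 a.1 p x (by omega) (by omega)
      show (-1 : ℝ) ^ (a.1 + a.2) • C.dl (k + 1) a.1 p p (C.dl k a.2 p p x)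
          + (-1 : ℝ) ^ (a.2 + (a.1 - 1)) • C.dl (k + 1) a.2 p p (C.dl k (a.1 - 1) p p x) = 0
      rw [hdd, ← add_smul,
        show a.1 + a.2 = (a.2 + (a.1 - 1)) + 1 by omega, pow_succ]
      ring_nf
      rw [zero_smul]
  · intro a ha _
    by_cases hle : a.1 ≤ a.2
    · rw [if_pos hle]
      intro heq
      have h1 := congrArg Prod.fst heq
      simp only at h1
      omega
    · rw [if_neg hle]
      intro heq
      have h1 := congrArg Prod.fst heq
      have h2 := congrArg Prod.snd heq
      simp only at h1 h2
      omega
  · intro a ha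
    simp only [Finset.mem_product, Finset.mem_range] at ha
    by_cases hle : a.1 ≤ a.2
    · rw [if_pos hle]
      split_ifs with h
      · exfalso; simp at h; omega
      · rw [Prod.ext_iff]; constructor <;> (try simp) <;> omega
    · rw [if_neg hle]
      push_neg at hle
      split_ifs with h
      · rw [Prod.ext_iff]; constructor <;> (try simp) <;> omega
      · exfalso; simp at h; omega
  · intro a ha
    simp only [Finset.mem_product, Finset.mem_range] at ha
    by_cases hle : a.1 ≤ a.2
    · rw [if_pos hle]
      simp only [Finset.mem_product, Finset.mem_range]
      constructor <;> (try simp) <;> omega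
    · rw [if_neg hle]
      push_neg at hle
      simp only [Finset.mem_product, Finset.mem_range]
      constructor <;> (try simp) <;> omega

lemma toZero_add (k : ℕ) (p : ℤ) (x y : C.X k p) :
    C.toZero k p (x + y) = C.toZero k p x + C.toZero k p y := by
  induction k with
  | zero => rfl
  | succ j ih => simp only [toZero, map_add, ih]

lemma toZero_smul (k : ℕ) (p : ℤ) (c : ℝ) (x : C.X k p) :
    C.toZero k p (c • x) = c • C.toZero k p x := by
  induction k with
  | zero => rfl
  | succ j ih => simp only [toZero, map_smul, ih]

/-- `toZero` as a linear map. -/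
noncomputable def toZeroL (k : ℕ) (p : ℤ) : C.X k p →ₗ[ℝ] C.X 0 p where
  toFun := C.toZero k p
  map_add' := C.toZero_add k p
  map_smul' := C.toZero_smul k p

lemma toZeroL_apply (k : ℕ) (p : ℤ) (x : C.X k p) : C.toZeroL k p x = C.toZero k p x := rfl

lemma toZero_d (k : ℕ) (p q : ℤ) (x : C.X k p) :
    C.toZero k q (C.d k p q x) = C.d 0 p q (C.toZero k p x) := by
  induction k with
  | zero => rfl
  | succ j ih => simp only [toZero, C.sg_chain, ih]

lemma toZero_sub (k : ℕ) (p : ℤ) (x y : C.X k p) :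
    C.toZero k p (x - y) = C.toZero k p x - C.toZero k p y := by
  simpa [toZeroL_apply] using map_sub (C.toZeroL k p) x y

lemma toZero_neg (k : ℕ) (p : ℤ) (x : C.X k p) :
    C.toZero k p (-x) = -(C.toZero k p x) := by
  simpa [toZeroL_apply] using map_neg (C.toZeroL k p) x

lemma toZero_cst {k : ℕ} {p q : ℤ} (h : p = q) (v : C.X k p) :
    C.toZero k q (C.cst h v) = C.cst h (C.toZero k p v) := by subst h; rfl

lemma toZero_dl (k i : ℕ) (p : ℤ) (x : C.X k p) (hi : i ≤ k + 1) :
    C.toZero (k + 1) p (C.dl k i p p x) = C.toZero k p x := by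
  induction k generalizing i with
  | zero =>
    show C.toZero 0 p (C.sg 0 0 p (C.dl 0 i p p x)) = x
    interval_cases i
    · rw [C.sg_dl_self 0 0 p x (le_refl 0)]; rfl
    · rw [C.sg_dl_succ 0 0 p x (le_refl 0)]; rfl
  | succ j ih =>
    show C.toZero (j + 1) p (C.sg (j + 1) 0 p (C.dl (j + 1) i p p x)) = C.toZero (j + 1) p x
    match i, hi with
    | 0, _ => rw [C.sg_dl_self (j + 1) 0 p x (by omega)]
    | 1, _ =>
      have h01 : C.dl (j + 1) 1 p p x = C.dl (j + 1) (0 + 1) p p x := rfl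
      rw [h01, C.sg_dl_succ (j + 1) 0 p x (by omega)]
    | (m + 2), hi =>
      rw [C.sg_dl_gt j (m + 2) 0 p x (by omega) (by omega) (by omega)]
      have := ih (m + 2 - 1) (C.sg j 0 p x) (by omega)
      rw [this]
      rfl

lemma toZero_delta (k : ℕ) (p : ℤ) (x : C.X k p) :
    C.toZero (k + 1) p (C.delta k p x) = (if Even k then (0 : ℝ) else 1) • C.toZero k p x := by
  rw [delta_apply, ← toZeroL_apply, map_sum]
  have : ∀ i ∈ Finset.range (k + 2), C.toZeroL (k + 1) p ((-1 : ℝ) ^ i • C.dl k i p p x)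
      = (-1 : ℝ) ^ i • C.toZero k p x := by
    intro i hi
    rw [map_smul, toZeroL_apply, C.toZero_dl k i p x (by simp at hi; omega)]
  rw [Finset.sum_congr rfl this, ← Finset.sum_smul, neg_one_geom_sum]
  congr 1
  simp [Nat.even_add_one, parity_simps]

lemma sign_eq (n : ℤ) (j : ℕ) :
    ((-1 : ℝ)) ^ ((n + (j : ℤ)) + ((j : ℤ) + 1) - 1) = (-1 : ℝ) ^ n := by
  rw [show (n + (j : ℤ)) + ((j : ℤ) + 1) - 1 = n + 2 * (j : ℤ) by ring,
    zpow_add₀ (by norm_num : (-1 : ℝ) ≠ 0)]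
  have he : Even (2 * (j : ℤ)) := ⟨(j : ℤ), by ring⟩
  rw [he.neg_one_zpow, mul_one]

lemma totD_zero' (n m : ℤ) (x : C.Tot n) :
    C.totD n m x 0 = C.d 0 (n + ((0 : ℕ) : ℤ)) (m + ((0 : ℕ) : ℤ)) (x 0) + 0 := rfl

lemma totD_succ (n m : ℤ) (x : C.Tot n) (j : ℕ) :
    C.totD n m x (j + 1) = C.d (j + 1) (n + ((j + 1 : ℕ) : ℤ)) (m + ((j + 1 : ℕ) : ℤ)) (x (j + 1))
      + (-1 : ℝ) ^ ((n + (j : ℤ)) + ((j : ℤ) + 1) - 1) •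
          ∑ i ∈ Finset.range (j + 2),
            (-1 : ℝ) ^ i • C.dl j i (n + (j : ℤ)) (m + ((j + 1 : ℕ) : ℤ)) (x j) := rfl

end CosimplicialChainComplex

/-- dependent-choice style sequence builder -/
theorem exists_seq' {α : ℕ → Type} (P : ∀ k, α k → Prop) (L : ∀ k, α k → α (k + 1) → Prop)
    (x0 : α 0) (h0 : P 0 x0)
    (hs : ∀ k (x : α k), P k x → ∃ y, P (k + 1) y ∧ L k x y) :
    ∃ f : ∀ k, α k, f 0 = x0 ∧ (∀ k, P k (f k)) ∧ (∀ k, L k (f k) (f (k + 1))) := by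
  classical
  let g : ∀ k, {x : α k // P k x} := fun k => Nat.rec ⟨x0, h0⟩
    (fun k p => ⟨(hs k p.1 p.2).choose, (hs k p.1 p.2).choose_spec.1⟩) k
  exact ⟨fun k => (g k).1, rfl, fun k => (g k).2,
    fun k => (hs k (g k).1 (g k).2).choose_spec.2⟩


/-- Lemma 6.4.  If for every `k ≥ 0` the chain map `C(k) → C(0)`
induced by the cosimplicial structure is a quasi-isomorphism, then the projection
`pr₀ : C̃ → C(0)` from the total complex is a quasi-isomorphism. -/
theorem CosimplicialChainComplex.pr_zero_quasiIso (C : CosimplicialChainComplex)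
    (hqis_inj : ∀ (k : ℕ) (q : ℤ) (x : C.X k q), C.IsCycle k q x →
      C.IsBoundary 0 q (C.toZero k q x) → C.IsBoundary k q x)
    (hqis_surj : ∀ (k : ℕ) (q : ℤ) (y : C.X 0 q), C.IsCycle 0 q y →
      ∃ x : C.X k q, C.IsCycle k q x ∧ C.IsBoundary 0 q (y - C.toZero k q x)) :
    ∀ n : ℤ,
      (∀ x : C.Tot n, C.totD n (n - 1) x = 0 →
        C.IsBoundary 0 (n + ((0 : ℕ) : ℤ)) (x 0) →
        ∃ y : C.Tot (n + 1), C.totD (n + 1) n y = x) ∧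
      (∀ w : C.X 0 (n + ((0 : ℕ) : ℤ)), C.IsCycle 0 (n + ((0 : ℕ) : ℤ)) w →
        ∃ x : C.Tot n, C.totD n (n - 1) x = 0 ∧
          C.IsBoundary 0 (n + ((0 : ℕ) : ℤ)) (w - x 0)) := by
  intro n
  constructor
  · -- surjectivity of `totD` onto cycles whose 0-component bounds
    intro x hx hxb
    have hneg : ((-1 : ℝ)) ≠ 0 := by norm_num
    have hcast : ∀ k : ℕ, n + 1 + (k : ℤ) = n + ((k + 1 : ℕ) : ℤ) := fun k => by push_cast; ring
    have hcc : ((-1 : ℝ) ^ n) * ((-1 : ℝ) ^ n) = 1 := by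
      rw [← zpow_add₀ hneg]
      exact Even.neg_one_zpow ⟨n, rfl⟩
    have hc'c : ((-1 : ℝ) ^ (n + 1)) * ((-1 : ℝ) ^ n) = -1 := by
      rw [← zpow_add₀ hneg]
      exact Odd.neg_one_zpow ⟨n, by ring⟩
    have hc'c' : ((-1 : ℝ) ^ (n + 1)) * ((-1 : ℝ) ^ (n + 1)) = 1 := by
      rw [← zpow_add₀ hneg]
      exact Even.neg_one_zpow ⟨n + 1, by ring⟩
    have hc' : ((-1 : ℝ) ^ (n + 1)) = -((-1 : ℝ) ^ n) := by
      rw [zpow_add₀ hneg, zpow_one, mul_neg_one]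
    -- component equations of the cycle x
    have hcomp : ∀ j : ℕ, C.d (j + 1) (n + ((j + 1 : ℕ) : ℤ)) (n + (j : ℤ)) (x (j + 1))
        = -(((-1 : ℝ) ^ n) • C.delta j (n + (j : ℤ)) (x j)) := by
      intro j
      have h1 : C.totD n (n - 1) x (j + 1) = 0 := by rw [hx]; rfl
      rw [C.totD_succ, sign_eq] at h1
      rw [show (n - 1) + ((j + 1 : ℕ) : ℤ) = n + (j : ℤ) by push_cast; ring] at h1
      rw [← C.delta_apply] at h1
      exact eq_neg_of_add_eq_zero_left h1
    -- the "automatic" identity on toZero of components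
    have hTgen : ∀ k : ℕ, C.d 0 (n + ((k + 1 + 1 : ℕ) : ℤ)) (n + ((k + 1 : ℕ) : ℤ))
        (C.toZero (k + 1 + 1) (n + ((k + 1 + 1 : ℕ) : ℤ)) (x (k + 1 + 1)))
        = -(((-1 : ℝ) ^ n) • ((if Even (k + 1) then (0 : ℝ) else 1) •
            C.toZero (k + 1) (n + ((k + 1 : ℕ) : ℤ)) (x (k + 1)))) := by
      intro k
      have h1 := congrArg (C.toZeroL (k + 1 + 1) (n + ((k + 1 : ℕ) : ℤ))) (hcomp (k + 1))
      rw [map_neg, map_smul, C.toZeroL_apply, C.toZeroL_apply, C.toZero_d, C.toZero_delta] at h1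
      exact h1
    have hTb : ∀ k : ℕ, Even k → C.IsBoundary 0 (n + ((k + 1 : ℕ) : ℤ))
        (C.toZero (k + 1) (n + ((k + 1 : ℕ) : ℤ)) (x (k + 1))) := by
      intro k hk
      have h1 := hTgen k
      rw [if_neg (by simp [Nat.even_add_one, hk]), one_smul] at h1
      have h2 : C.toZero (k + 1) (n + ((k + 1 : ℕ) : ℤ)) (x (k + 1))
          = C.d 0 (n + ((k + 1 + 1 : ℕ) : ℤ)) (n + ((k + 1 : ℕ) : ℤ))
            ((-((-1 : ℝ) ^ n)) • C.toZero (k + 1 + 1) (n + ((k + 1 + 1 : ℕ) : ℤ)) (x (k + 1 + 1))) := by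
        rw [map_smul, h1, smul_neg, smul_smul, neg_mul, hcc, neg_smul, neg_neg, one_smul]
      rw [h2]
      exact C.isBoundary_of_d (by push_cast; ring) _
    -- base
    obtain ⟨y0, hy0⟩ := C.isBoundary_elim
      (show n + 1 + ((0 : ℕ) : ℤ) = (n + ((0 : ℕ) : ℤ)) + 1 by push_cast; ring) hxb
    have hbase : (C.delta 0 (n + ((0 : ℕ) : ℤ))
          (x 0 - C.d 0 (n + 1 + ((0 : ℕ) : ℤ)) (n + ((0 : ℕ) : ℤ)) y0) = 0)
        ∧ (Odd 0 → C.IsBoundary 0 (n + ((0 + 1 : ℕ) : ℤ))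
            (C.toZero (0 + 1) (n + ((0 + 1 : ℕ) : ℤ)) (x (0 + 1))
              - ((-1 : ℝ) ^ (n + 1)) • C.cst (hcast 0) (C.toZero 0 (n + 1 + ((0 : ℕ) : ℤ)) y0))) := by
      constructor
      · rw [hy0, sub_self, map_zero]
      · intro h; exact absurd h (by simp)
    -- step
    have hstep : ∀ (k : ℕ) (a : C.X k (n + 1 + (k : ℤ))),
        ((C.delta k (n + (k : ℤ)) (x k - C.d k (n + 1 + (k : ℤ)) (n + (k : ℤ)) a) = 0)
          ∧ (Odd k → C.IsBoundary 0 (n + ((k + 1 : ℕ) : ℤ))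
              (C.toZero (k + 1) (n + ((k + 1 : ℕ) : ℤ)) (x (k + 1))
                - ((-1 : ℝ) ^ (n + 1)) • C.cst (hcast k) (C.toZero k (n + 1 + (k : ℤ)) a)))) →
        ∃ b : C.X (k + 1) (n + 1 + ((k + 1 : ℕ) : ℤ)),
          ((C.delta (k + 1) (n + ((k + 1 : ℕ) : ℤ))
              (x (k + 1) - C.d (k + 1) (n + 1 + ((k + 1 : ℕ) : ℤ)) (n + ((k + 1 : ℕ) : ℤ)) b) = 0)
            ∧ (Odd (k + 1) → C.IsBoundary 0 (n + ((k + 1 + 1 : ℕ) : ℤ))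
                (C.toZero (k + 1 + 1) (n + ((k + 1 + 1 : ℕ) : ℤ)) (x (k + 1 + 1))
                  - ((-1 : ℝ) ^ (n + 1)) • C.cst (hcast (k + 1))
                      (C.toZero (k + 1) (n + 1 + ((k + 1 : ℕ) : ℤ)) b))))
          ∧ (C.d (k + 1) (n + 1 + ((k + 1 : ℕ) : ℤ)) (n + ((k + 1 : ℕ) : ℤ)) b
              + ((-1 : ℝ) ^ (n + 1)) • C.cst (hcast k) (C.delta k (n + 1 + (k : ℤ)) a)
              = x (k + 1)) := by
      rintro k a ⟨ha1, ha2⟩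
      set z : C.X (k + 1) (n + ((k + 1 : ℕ) : ℤ))
        := x (k + 1) - ((-1 : ℝ) ^ (n + 1)) • C.cst (hcast k) (C.delta k (n + 1 + (k : ℤ)) a)
        with hzdef
      have hzc : C.d (k + 1) (n + ((k + 1 : ℕ) : ℤ)) (n + ((k + 1 : ℕ) : ℤ) - 1) z = 0 := by
        rw [show n + ((k + 1 : ℕ) : ℤ) - 1 = n + (k : ℤ) by push_cast; ring]
        rw [hzdef, map_sub, map_smul, C.d_cst, hcomp k, ← C.delta_d]
        have he : C.delta k (n + (k : ℤ)) (x k)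
            = C.delta k (n + (k : ℤ)) (C.d k (n + 1 + (k : ℤ)) (n + (k : ℤ)) a) := by
          have h3 := ha1
          rw [map_sub, sub_eq_zero] at h3
          exact h3
        rw [he, hc', neg_smul, sub_neg_eq_add, neg_add_cancel]
      have hzto_even : Even k → C.toZero (k + 1) (n + ((k + 1 : ℕ) : ℤ)) z
          = C.toZero (k + 1) (n + ((k + 1 : ℕ) : ℤ)) (x (k + 1)) := by
        intro hk
        rw [hzdef, C.toZero_sub, C.toZero_smul, C.toZero_cst, C.toZero_delta, if_pos hk,
          zero_smul, map_zero, smul_zero, sub_zero]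
      have hzt : C.IsBoundary 0 (n + ((k + 1 : ℕ) : ℤ))
          (C.toZero (k + 1) (n + ((k + 1 : ℕ) : ℤ)) z) := by
        rcases Nat.even_or_odd k with hk | hk
        · rw [hzto_even hk]
          exact hTb k hk
        · rw [hzdef, C.toZero_sub, C.toZero_smul, C.toZero_cst, C.toZero_delta,
            if_neg (Nat.not_even_iff_odd.mpr hk), one_smul]
          exact ha2 hk
      obtain ⟨y', hy'⟩ := C.isBoundary_elim
        (show n + 1 + ((k + 1 : ℕ) : ℤ) = (n + ((k + 1 : ℕ) : ℤ)) + 1 by push_cast; ring)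
        (hqis_inj (k + 1) (n + ((k + 1 : ℕ) : ℤ)) z hzc hzt)
      rcases Nat.even_or_odd k with hk | hk
      · -- k even : adjust using hqis_surj
        set y₀ : C.X 0 (n + 1 + ((k + 1 : ℕ) : ℤ))
          := ((-1 : ℝ) ^ (n + 1)) • C.cst (show n + ((k + 1 + 1 : ℕ) : ℤ) = n + 1 + ((k + 1 : ℕ) : ℤ) by push_cast; ring)
                (C.toZero (k + 1 + 1) (n + ((k + 1 + 1 : ℕ) : ℤ)) (x (k + 1 + 1)))
              - C.toZero (k + 1) (n + 1 + ((k + 1 : ℕ) : ℤ)) y' with hy₀def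
        have hy₀c : C.d 0 (n + 1 + ((k + 1 : ℕ) : ℤ)) (n + 1 + ((k + 1 : ℕ) : ℤ) - 1) y₀ = 0 := by
          rw [show n + 1 + ((k + 1 : ℕ) : ℤ) - 1 = n + ((k + 1 : ℕ) : ℤ) by push_cast; ring]
          rw [hy₀def, map_sub, map_smul, C.d_cst,
            ← C.toZero_d (k + 1) (n + 1 + ((k + 1 : ℕ) : ℤ)) (n + ((k + 1 : ℕ) : ℤ)) y',
            hy', hzto_even hk]
          rw [hTgen k, if_neg (by simp [Nat.even_add_one, hk]), one_smul]
          rw [smul_neg, smul_smul, hc'c, neg_smul, neg_neg, one_smul, sub_self]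
        obtain ⟨u, huc, hub⟩ := hqis_surj (k + 1) (n + 1 + ((k + 1 : ℕ) : ℤ)) y₀ hy₀c
        have hud : C.d (k + 1) (n + 1 + ((k + 1 : ℕ) : ℤ)) (n + ((k + 1 : ℕ) : ℤ)) u = 0 := by
          rw [show n + ((k + 1 : ℕ) : ℤ) = n + 1 + ((k + 1 : ℕ) : ℤ) - 1 by push_cast; ring]
          exact huc
        have hb : C.d (k + 1) (n + 1 + ((k + 1 : ℕ) : ℤ)) (n + ((k + 1 : ℕ) : ℤ)) (y' + u) = z := by
          rw [map_add, hy', hud, add_zero]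
        refine ⟨y' + u, ⟨?_, ?_⟩, ?_⟩
        · rw [hb, show x (k + 1) - z
              = ((-1 : ℝ) ^ (n + 1)) • C.cst (hcast k) (C.delta k (n + 1 + (k : ℤ)) a) from by
            rw [hzdef, sub_sub_cancel]]
          rw [map_smul, C.delta_cst, C.delta_delta, map_zero, smul_zero]
        · intro _
          have key : C.toZero (k + 1 + 1) (n + ((k + 1 + 1 : ℕ) : ℤ)) (x (k + 1 + 1))
              - ((-1 : ℝ) ^ (n + 1)) • C.cst (hcast (k + 1))
                  (C.toZero (k + 1) (n + 1 + ((k + 1 : ℕ) : ℤ)) (y' + u))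
              = ((-1 : ℝ) ^ (n + 1)) • C.cst (hcast (k + 1))
                  (y₀ - C.toZero (k + 1) (n + 1 + ((k + 1 : ℕ) : ℤ)) u) := by
            rw [hy₀def, C.toZero_add]
            simp only [map_sub, map_add, map_smul, smul_sub, smul_add, smul_smul, hc'c',
              C.cst_cst, C.cst_refl, one_smul]
            abel
          rw [key]
          exact (C.cst_isBoundary _ hub).smul' _
        · rw [hb, hzdef, sub_add_cancel]
      · -- k odd
        refine ⟨y', ⟨?_, ?_⟩, ?_⟩
        · rw [hy', show x (k + 1) - z
              = ((-1 : ℝ) ^ (n + 1)) • C.cst (hcast k) (C.delta k (n + 1 + (k : ℤ)) a) from by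
            rw [hzdef, sub_sub_cancel]]
          rw [map_smul, C.delta_cst, C.delta_delta, map_zero, smul_zero]
        · intro hodd
          exfalso
          rw [Nat.odd_iff] at hodd hk
          omega
        · rw [hy', hzdef, sub_add_cancel]
    obtain ⟨f, hf0, hP, hL⟩ := exists_seq'
      (α := fun k => C.X k (n + 1 + (k : ℤ)))
      (P := fun k a => (C.delta k (n + (k : ℤ)) (x k - C.d k (n + 1 + (k : ℤ)) (n + (k : ℤ)) a) = 0)
        ∧ (Odd k → C.IsBoundary 0 (n + ((k + 1 : ℕ) : ℤ))
            (C.toZero (k + 1) (n + ((k + 1 : ℕ) : ℤ)) (x (k + 1))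
              - ((-1 : ℝ) ^ (n + 1)) • C.cst (hcast k) (C.toZero k (n + 1 + (k : ℤ)) a))))
      (L := fun k a b => C.d (k + 1) (n + 1 + ((k + 1 : ℕ) : ℤ)) (n + ((k + 1 : ℕ) : ℤ)) b
          + ((-1 : ℝ) ^ (n + 1)) • C.cst (hcast k) (C.delta k (n + 1 + (k : ℤ)) a)
          = x (k + 1))
      y0 hbase hstep
    refine ⟨f, ?_⟩
    funext k
    cases k with
    | zero =>
      rw [C.totD_zero' (n + 1) n f, add_zero, hf0]
      exact hy0
    | succ j =>
      rw [C.totD_succ (n + 1) n f j, sign_eq]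
      have hdl : ∀ i : ℕ, (-1 : ℝ) ^ i • C.dl j i (n + 1 + (j : ℤ)) (n + ((j + 1 : ℕ) : ℤ)) (f j)
          = C.cst (hcast j) ((-1 : ℝ) ^ i • C.dl j i (n + 1 + (j : ℤ)) (n + 1 + (j : ℤ)) (f j)) :=
        fun i => by rw [C.dl_cast j i (hcast j), map_smul]
      simp only [hdl]
      rw [← map_sum, ← C.delta_apply]
      exact hL j
  · -- surjectivity on homology
    intro w hw
    have hneg : ((-1 : ℝ)) ≠ 0 := by norm_num
    have hw' : C.d 0 (n + ((0 : ℕ) : ℤ)) (n + ((0 : ℕ) : ℤ) - 1) w = 0 := hw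
    have hbase : (C.d (0 + 1) (n + ((0 : ℕ) : ℤ)) (n + ((0 : ℕ) : ℤ) - 1)
          (C.delta 0 (n + ((0 : ℕ) : ℤ)) w) = 0)
        ∧ (Odd 0 → C.IsBoundary 0 (n + ((0 : ℕ) : ℤ)) (C.toZero 0 (n + ((0 : ℕ) : ℤ)) w)) := by
      constructor
      · rw [← C.delta_d, hw', map_zero]
      · intro h; exact absurd h (by simp)
    have hstep : ∀ (k : ℕ) (a : C.X k (n + (k : ℤ))),
        ((C.d (k + 1) (n + (k : ℤ)) (n + (k : ℤ) - 1) (C.delta k (n + (k : ℤ)) a) = 0)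
          ∧ (Odd k → C.IsBoundary 0 (n + (k : ℤ)) (C.toZero k (n + (k : ℤ)) a))) →
        ∃ b : C.X (k + 1) (n + ((k + 1 : ℕ) : ℤ)),
          ((C.d (k + 1 + 1) (n + ((k + 1 : ℕ) : ℤ)) (n + ((k + 1 : ℕ) : ℤ) - 1)
              (C.delta (k + 1) (n + ((k + 1 : ℕ) : ℤ)) b) = 0)
            ∧ (Odd (k + 1) → C.IsBoundary 0 (n + ((k + 1 : ℕ) : ℤ))
                (C.toZero (k + 1) (n + ((k + 1 : ℕ) : ℤ)) b)))
          ∧ (C.d (k + 1) (n + ((k + 1 : ℕ) : ℤ)) (n + (k : ℤ)) b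
              = -(((-1 : ℝ) ^ n) • C.delta k (n + (k : ℤ)) a)) := by
      rintro k a ⟨ha1, ha2⟩
      have hzc : C.d (k + 1) (n + (k : ℤ)) (n + (k : ℤ) - 1)
          (((-1 : ℝ) ^ n) • C.delta k (n + (k : ℤ)) a) = 0 := by
        rw [map_smul, ha1, smul_zero]
      have hzt : C.IsBoundary 0 (n + (k : ℤ))
          (C.toZero (k + 1) (n + (k : ℤ)) (((-1 : ℝ) ^ n) • C.delta k (n + (k : ℤ)) a)) := by
        rw [C.toZero_smul, C.toZero_delta]
        rcases Nat.even_or_odd k with hk | hk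
        · rw [if_pos hk, zero_smul, smul_zero]; exact C.isBoundary_zero 0 _
        · rw [if_neg (Nat.not_even_iff_odd.mpr hk), one_smul]
          exact (ha2 hk).smul' _
      have hzb := hqis_inj (k + 1) (n + (k : ℤ)) _ hzc hzt
      obtain ⟨y', hy'⟩ := C.isBoundary_elim
        (show n + ((k + 1 : ℕ) : ℤ) = (n + (k : ℤ)) + 1 by push_cast; ring) hzb
      rcases Nat.even_or_odd k with hk | hk
      · -- k even : adjust
        have hgc : C.d 0 (n + ((k + 1 : ℕ) : ℤ)) (n + ((k + 1 : ℕ) : ℤ) - 1)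
            (C.toZero (k + 1) (n + ((k + 1 : ℕ) : ℤ)) y') = 0 := by
          rw [show n + ((k + 1 : ℕ) : ℤ) - 1 = n + (k : ℤ) by push_cast; ring]
          rw [← C.toZero_d, hy', C.toZero_smul, C.toZero_delta, if_pos hk, zero_smul, smul_zero]
        obtain ⟨u, huc, hub⟩ := hqis_surj (k + 1) (n + ((k + 1 : ℕ) : ℤ)) _ hgc
        have hud : C.d (k + 1) (n + ((k + 1 : ℕ) : ℤ)) (n + (k : ℤ)) u = 0 := by
          rw [show n + (k : ℤ) = n + ((k + 1 : ℕ) : ℤ) - 1 by push_cast; ring]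
          exact huc
        have hb : C.d (k + 1) (n + ((k + 1 : ℕ) : ℤ)) (n + (k : ℤ)) (u - y')
            = -(((-1 : ℝ) ^ n) • C.delta k (n + (k : ℤ)) a) := by
          rw [map_sub, hud, hy', zero_sub]
        refine ⟨u - y', ⟨?_, ?_⟩, hb⟩
        · rw [show n + ((k + 1 : ℕ) : ℤ) - 1 = n + (k : ℤ) by push_cast; ring]
          rw [← C.delta_d, hb, map_neg, map_smul, C.delta_delta, smul_zero, neg_zero]
        · intro _
          have h1 : C.toZero (k + 1) (n + ((k + 1 : ℕ) : ℤ)) (u - y')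
              = -(C.toZero (k + 1) (n + ((k + 1 : ℕ) : ℤ)) y'
                  - C.toZero (k + 1) (n + ((k + 1 : ℕ) : ℤ)) u) := by
            rw [C.toZero_sub, neg_sub]
          rw [h1]
          exact hub.neg'
      · -- k odd
        have hb : C.d (k + 1) (n + ((k + 1 : ℕ) : ℤ)) (n + (k : ℤ)) (-y')
            = -(((-1 : ℝ) ^ n) • C.delta k (n + (k : ℤ)) a) := by
          rw [map_neg, hy']
        refine ⟨-y', ⟨?_, ?_⟩, hb⟩
        · rw [show n + ((k + 1 : ℕ) : ℤ) - 1 = n + (k : ℤ) by push_cast; ring]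
          rw [← C.delta_d, hb, map_neg, map_smul, C.delta_delta, smul_zero, neg_zero]
        · intro hodd
          exfalso
          rw [Nat.odd_iff] at hodd hk
          omega
    obtain ⟨f, hf0, hP, hL⟩ := exists_seq'
      (α := fun k => C.X k (n + (k : ℤ)))
      (P := fun k a => (C.d (k + 1) (n + (k : ℤ)) (n + (k : ℤ) - 1)
          (C.delta k (n + (k : ℤ)) a) = 0)
        ∧ (Odd k → C.IsBoundary 0 (n + (k : ℤ)) (C.toZero k (n + (k : ℤ)) a)))
      (L := fun k a b => C.d (k + 1) (n + ((k + 1 : ℕ) : ℤ)) (n + (k : ℤ)) b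
          = -(((-1 : ℝ) ^ n) • C.delta k (n + (k : ℤ)) a))
      w hbase hstep
    refine ⟨f, ?_, ?_⟩
    · funext k
      have h0 : (0 : C.Tot (n - 1)) k = 0 := rfl
      rw [h0]
      cases k with
      | zero =>
        rw [C.totD_zero' n (n - 1) f, add_zero]
        rw [show (n - 1) + ((0 : ℕ) : ℤ) = n + ((0 : ℕ) : ℤ) - 1 by push_cast; ring]
        rw [hf0]
        exact hw'
      | succ j =>
        rw [C.totD_succ n (n - 1) f j, sign_eq]
        rw [show (n - 1) + ((j + 1 : ℕ) : ℤ) = n + (j : ℤ) by push_cast; ring]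
        rw [← C.delta_apply, hL j, neg_add_cancel]
    · rw [hf0, sub_self]
      exact C.isBoundary_zero 0 _
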